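/- Let g be an n×n toroidal grid diagram in which every row and every column contains a marking, and let C̃(g) be the F-vector space generated by grid states with differential ∂̃(x) = Σ_y #{r ∈ Rect°(x,y) : r contains no markings} · y (mod 2). Then ∂̃ ∘ ∂̃ = 0. -/

import Mathlib

/-- The toroidal rectangle with rows in the cyclic interval `[a, b)` and columns in
the cyclic interval `[c, d)` contains no point `(i, x i)` of the grid state `x`
in its interior. -/
def EmptyR {n : ℕ} (x : Equiv.Perm (Fin n)) (a b c d : Fin n) : Prop :=
  ∀ i : Fin n, ¬(0 < (i - a).val ∧ (i - a).val < (b - a).val ∧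
    0 < (x i - c).val ∧ (x i - c).val < (d - c).val)

/-- The toroidal rectangle with rows `[a, b)` and columns `[c, d)` (cyclically)
contains none of the markings in `Mk`. -/
def FreeR {n : ℕ} (Mk : Finset (Fin n × Fin n)) (a b c d : Fin n) : Prop :=
  ∀ s t : Fin n, (s, t) ∈ Mk →
    ¬((s - a).val < (b - a).val ∧ (t - c).val < (d - c).val)

/-- The number of empty rectangles from the grid state `x` to the grid state `y`
on the `n×n` toroidal grid that avoid all the markings in `Mk`.  Such a rectangle
swaps the rows `a = ab.1`, `b = ab.2` (so `y = x ∘ (a b)`) and spans rows `[a, b)`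
and columns `[x a, x b)` cyclically. -/
noncomputable def numRect {n : ℕ} (Mk : Finset (Fin n × Fin n))
    (x y : Equiv.Perm (Fin n)) : ℕ :=
  Nat.card {ab : Fin n × Fin n // ab.1 ≠ ab.2 ∧
    (∀ i, y i = x (Equiv.swap ab.1 ab.2 i)) ∧
    EmptyR x ab.1 ab.2 (x ab.1) (x ab.2) ∧
    FreeR Mk ab.1 ab.2 (x ab.1) (x ab.2)}

set_option linter.unusedSectionVars false
set_option linter.unreachableTactic false
set_option linter.unusedTactic false
set_option maxHeartbeats 1000000

namespace GH
variable {n : ℕ} [NeZero n]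

lemma sub_val_lt (p q : Fin n) : (p - q).val < n := (p - q).isLt

lemma sub_self_val (p : Fin n) : (p - p).val = 0 := by simp

lemma eq_of_sub_val_eq_zero {p q : Fin n} (h : (p - q).val = 0) : p = q := by
  have : p - q = 0 := Fin.ext (by simpa using h)
  rwa [sub_eq_zero] at this

lemma sub_val_pos {p q : Fin n} (h : p ≠ q) : 0 < (p - q).val :=
  Nat.pos_of_ne_zero fun h0 => h (eq_of_sub_val_eq_zero h0)

lemma eq_of_sub_val_eq {o p q : Fin n} (h : (p - o).val = (q - o).val) : p = q := by
  have : p - o = q - o := Fin.ext h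
  exact sub_left_inj.mp this

lemma tri (o p q : Fin n) :
    (p - o).val + (q - p).val = (q - o).val ∨
    (p - o).val + (q - p).val = n + (q - o).val := by
  have h : (p - o) + (q - p) = q - o := by abel
  have hv : ((p - o) + (q - p)).val = ((p - o).val + (q - p).val) % n :=
    Fin.val_add _ _
  rw [h] at hv
  have h1 := (p - o).isLt
  have h2 := (q - p).isLt
  rcases Nat.lt_or_ge ((p - o).val + (q - p).val) n with hl | hl
  · left; rw [Nat.mod_eq_of_lt hl] at hv; omega
  · right
    have : ((p - o).val + (q - p).val) % n = (p - o).val + (q - p).val - n := by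
      rw [Nat.mod_eq_sub_mod hl, Nat.mod_eq_of_lt (by omega)]
    omega

lemma antisym {p q : Fin n} (h : p ≠ q) : (p - q).val + (q - p).val = n := by
  have := tri q p q
  rw [sub_self_val] at this
  have h1 := sub_val_pos h
  have h2 := sub_val_lt p q
  have h3 := sub_val_lt q p
  omega

/-- cyclic orientation: the three equivalent forms -/
lemma orient {p q r : Fin n} (hpq : p ≠ q) (hqr : q ≠ r) (hpr : p ≠ r)
    (h : (p - q).val < (r - q).val) :
    (q - r).val < (p - r).val ∧ (r - p).val < (q - p).val := by
  have t1 := tri q p r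
  have t2 := tri r q p
  have t3 := tri p r q
  have a1 := antisym hpq
  have a2 := antisym hqr
  have a3 := antisym hpr
  have b1 := sub_val_lt p q
  have b2 := sub_val_lt q p
  have b3 := sub_val_lt q r
  have b4 := sub_val_lt r q
  have b5 := sub_val_lt p r
  have b6 := sub_val_lt r p
  have p1 := sub_val_pos hpq
  have p2 := sub_val_pos hqr
  have p3 := sub_val_pos hpr
  have p4 := sub_val_pos hpq.symm
  have p5 := sub_val_pos hqr.symm
  have p6 := sub_val_pos hpr.symm
  omega

lemma cyc {p q r : Fin n} (hpq : p ≠ q) (hqr : q ≠ r) (hpr : p ≠ r) (i : Fin n) :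
    Equiv.swap p q (Equiv.swap q r i) = Equiv.swap q r (Equiv.swap r p i) := by
  simp only [Equiv.swap_apply_def]
  split_ifs <;> simp_all

lemma cyc' {p q r : Fin n} (hpq : p ≠ q) (hqr : q ≠ r) (hpr : p ≠ r) (i : Fin n) :
    Equiv.swap p q (Equiv.swap q r i) = Equiv.swap r p (Equiv.swap p q i) := by
  simp only [Equiv.swap_apply_def]
  split_ifs <;> simp_all

lemma swap_comm_of_disjoint {a b c d : Fin n} (hca : c ≠ a) (hcb : c ≠ b)
    (hda : d ≠ a) (hdb : d ≠ b) (i : Fin n) :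
    Equiv.swap a b (Equiv.swap c d i) = Equiv.swap c d (Equiv.swap a b i) := by
  simp only [Equiv.swap_apply_def]
  split_ifs <;> simp_all

lemma case1 {Mk : Finset (Fin n × Fin n)} {x : Equiv.Perm (Fin n)} {a b d : Fin n}
    (hab : a ≠ b) (had : a ≠ d) (hbd : b ≠ d)
    (W : (a - b).val < (d - b).val)
    (E1 : EmptyR x a b (x a) (x b)) (F1 : FreeR Mk a b (x a) (x b))
    (E2 : EmptyR (x * Equiv.swap a b) a d (x b) (x d))
    (F2 : FreeR Mk a d (x b) (x d)) :
    EmptyR x a d (x a) (x d) ∧ FreeR Mk a d (x a) (x d) ∧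
    EmptyR (x * Equiv.swap a d) d b (x a) (x b) ∧ FreeR Mk d b (x a) (x b) ∧
    (x a - x d).val < (x b - x d).val := by
  have hxab : x a ≠ x b := fun h => hab (x.injective h)
  have hxad : x a ≠ x d := fun h => had (x.injective h)
  have hxbd : x b ≠ x d := fun h => hbd (x.injective h)
  -- d strictly inside (a,b) in rows
  have hWd : 0 < (d - a).val ∧ (d - a).val < (b - a).val :=
    ⟨sub_val_pos (Ne.symm had), (orient hab hbd had W).2⟩
  -- x d strictly inside (x b, x a) in columns
  have hxd : 0 < (x d - x b).val ∧ (x d - x b).val < (x a - x b).val := by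
    have hE := E1 d
    have t1 := tri (x a) (x b) (x d)
    have a1 := antisym hxab
    have p1 := sub_val_pos hxad.symm
    have p2 := sub_val_pos hxbd.symm
    have p3 := sub_val_pos hxab.symm
    have b1 := sub_val_lt (x d) (x a)
    have b2 := sub_val_lt (x d) (x b)
    have b3 := sub_val_lt (x b) (x a)
    have hne : (x d - x a).val ≠ (x b - x a).val :=
      fun h => hxbd (eq_of_sub_val_eq h).symm
    omega
  have condback : (x a - x d).val < (x b - x d).val :=
    (orient hxbd.symm hxab.symm hxad.symm hxd.2).2
  refine ⟨?_, ?_, ?_, ?_, condback⟩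
  · -- EmptyR x a d (x a) (x d)
    rintro i ⟨h1, h2, h3, h4⟩
    have hia : i ≠ a := fun h => by rw [h, sub_self_val] at h1; omega
    have hib : i ≠ b := fun h => by rw [h] at h2; omega
    have hxia : x i ≠ x a := fun h => hia (x.injective h)
    have hxib : x i ≠ x b := fun h => hib (x.injective h)
    have hE1 := E1 i
    have hE2 := E2 i
    rw [Equiv.Perm.mul_apply, Equiv.swap_apply_of_ne_of_ne hia hib] at hE2
    have ti := tri (x a) (x b) (x i)
    have td := tri (x a) (x b) (x d)
    have a1 := antisym hxab
    have p1 := sub_val_pos hxia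
    have p2 := sub_val_pos hxib
    have b1 := sub_val_lt (x i) (x a)
    have b2 := sub_val_lt (x i) (x b)
    have b3 := sub_val_lt (x b) (x a)
    have b4 := sub_val_lt (x d) (x b)
    have b5 := sub_val_lt (x d) (x a)
    omega
  · -- FreeR Mk a d (x a) (x d)
    rintro s t hst ⟨g1, g2⟩
    have hF1 := F1 s t hst
    have hF2 := F2 s t hst
    have tt := tri (x a) (x b) t
    have td := tri (x a) (x b) (x d)
    have a1 := antisym hxab
    have b1 := sub_val_lt t (x a)
    have b2 := sub_val_lt t (x b)
    have b3 := sub_val_lt (x b) (x a)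
    have b4 := sub_val_lt (x d) (x b)
    have b5 := sub_val_lt (x d) (x a)
    omega
  · -- EmptyR (x * swap a d) d b (x a) (x b)
    rintro i ⟨h1, h2, h3, h4⟩
    rcases eq_or_ne i d with rfl | hid
    · rw [sub_self_val] at h1; omega
    rcases eq_or_ne i a with hia | hia
    · -- rows contradiction
      rw [hia] at h1 h2
      have t1 := tri a d b
      have a1 := antisym had
      have b1 := sub_val_lt (b) (d)
      have b2 := sub_val_lt (a) (d)
      have b3 := sub_val_lt (b) (a)
      omega
    · rw [Equiv.Perm.mul_apply, Equiv.swap_apply_of_ne_of_ne hia hid] at h3 h4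
      have hE1 := E1 i
      have t1 := tri a d i
      have t2 := tri a d b
      have a1 := antisym had
      have b1 := sub_val_lt i a
      have b2 := sub_val_lt i d
      have b3 := sub_val_lt b d
      have b4 := sub_val_lt b a
      omega
  · -- FreeR Mk d b (x a) (x b)
    rintro s t hst ⟨g1, g2⟩
    have hF1 := F1 s t hst
    have t1 := tri a d s
    have t2 := tri a d b
    have a1 := antisym had
    have b1 := sub_val_lt s a
    have b2 := sub_val_lt s d
    have b3 := sub_val_lt b d
    have b4 := sub_val_lt b a
    omega

lemma ann1 {Mk : Finset (Fin n × Fin n)} {x : Equiv.Perm (Fin n)} {a b : Fin n}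
    (hrow : ∀ s : Fin n, ∃ t : Fin n, (s, t) ∈ Mk) (hab : a ≠ b)
    (E1 : EmptyR x a b (x a) (x b)) (F1 : FreeR Mk a b (x a) (x b))
    (E2 : EmptyR (x * Equiv.swap a b) a b (x b) (x a))
    (F2 : FreeR Mk a b (x b) (x a)) : False := by
  have hxab : x a ≠ x b := fun h => hab (x.injective h)
  have hb1 : (b - a).val = 1 := by
    by_contra hne
    have hpos := sub_val_pos hab.symm
    have h2 : 1 < (b - a).val := by omega
    have hn2 : 1 < n := lt_trans h2 (sub_val_lt b a)
    set i := a + 1 with hidef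
    have hia : (i - a).val = 1 := by
      have : i - a = 1 := by rw [hidef]; abel
      rw [this, Fin.val_one', Nat.mod_eq_of_lt hn2]
    have hine_a : i ≠ a := fun h => by rw [h, sub_self_val] at hia; omega
    have hine_b : i ≠ b := fun h => by
      rw [h] at hia; omega
    have hxia : x i ≠ x a := fun h => hine_a (x.injective h)
    have hxib : x i ≠ x b := fun h => hine_b (x.injective h)
    have hE1 := E1 i
    have hE2 := E2 i
    rw [Equiv.Perm.mul_apply, Equiv.swap_apply_of_ne_of_ne hine_a hine_b] at hE2
    have t1 := tri (x a) (x b) (x i)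
    have a1 := antisym hxab
    have p1 := sub_val_pos hxia
    have p2 := sub_val_pos hxib
    have b1 := sub_val_lt (x i) (x a)
    have b2 := sub_val_lt (x i) (x b)
    have b3 := sub_val_lt (x b) (x a)
    have b4 := sub_val_lt (x a) (x b)
    omega
  obtain ⟨t, ht⟩ := hrow a
  have hF1 := F1 a t ht
  have hF2 := F2 a t ht
  have hz0 := sub_self_val a
  have t1 := tri (x a) (x b) t
  have a1 := antisym hxab
  have b1 := sub_val_lt t (x a)
  have b2 := sub_val_lt t (x b)
  have b3 := sub_val_lt (x b) (x a)
  have b4 := sub_val_lt (x a) (x b)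
  omega

lemma ann2 {Mk : Finset (Fin n × Fin n)} {x : Equiv.Perm (Fin n)} {a b : Fin n}
    (hcol : ∀ t : Fin n, ∃ s : Fin n, (s, t) ∈ Mk) (hab : a ≠ b)
    (E1 : EmptyR x a b (x a) (x b)) (F1 : FreeR Mk a b (x a) (x b))
    (E2 : EmptyR (x * Equiv.swap a b) b a (x a) (x b))
    (F2 : FreeR Mk b a (x a) (x b)) : False := by
  have hxab : x a ≠ x b := fun h => hab (x.injective h)
  have hb1 : (x b - x a).val = 1 := by
    by_contra hne
    have hpos := sub_val_pos hxab.symm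
    have h2 : 1 < (x b - x a).val := by omega
    have hn2 : 1 < n := lt_trans h2 (sub_val_lt (x b) (x a))
    set j := x a + 1 with hjdef
    have hja : (j - x a).val = 1 := by
      have : j - x a = 1 := by rw [hjdef]; abel
      rw [this, Fin.val_one', Nat.mod_eq_of_lt hn2]
    set i := x.symm j with hidef
    have hxi : x i = j := by rw [hidef]; exact x.apply_symm_apply j
    have hjne_a : j ≠ x a := fun h => by rw [h, sub_self_val] at hja; omega
    have hjne_b : j ≠ x b := fun h => by rw [h] at hja; omega
    have hine_a : i ≠ a := fun h => hjne_a (by rw [← hxi, h])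
    have hine_b : i ≠ b := fun h => hjne_b (by rw [← hxi, h])
    have hE1 := E1 i
    have hE2 := E2 i
    rw [Equiv.Perm.mul_apply, Equiv.swap_apply_of_ne_of_ne hine_a hine_b] at hE2
    rw [hxi] at hE1 hE2
    have t1 := tri a b i
    have a1 := antisym hab
    have p1 := sub_val_pos hine_a
    have p2 := sub_val_pos hine_b
    have b1 := sub_val_lt i a
    have b2 := sub_val_lt i b
    have b3 := sub_val_lt b a
    have b4 := sub_val_lt a b
    omega
  obtain ⟨s, hs⟩ := hcol (x a)
  have hF1 := F1 s (x a) hs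
  have hF2 := F2 s (x a) hs
  have hz0 := sub_self_val (x a)
  have t1 := tri a b s
  have a1 := antisym hab
  have b1 := sub_val_lt s a
  have b2 := sub_val_lt s b
  have b3 := sub_val_lt b a
  have b4 := sub_val_lt a b
  omega

lemma caseD {x : Equiv.Perm (Fin n)} {a b c d : Fin n}
    (hab : a ≠ b) (hcd : c ≠ d) (hca : c ≠ a) (hcb : c ≠ b)
    (hda : d ≠ a) (hdb : d ≠ b)
    (E1 : EmptyR x a b (x a) (x b))
    (E2 : EmptyR (x * Equiv.swap a b) c d (x c) (x d)) :
    EmptyR x c d (x c) (x d) ∧ EmptyR (x * Equiv.swap c d) a b (x a) (x b) := by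
  have inj : ∀ {i j : Fin n}, x i = x j → i = j := fun h => x.injective h
  have hxab : x a ≠ x b := fun h => hab (inj h)
  have hxcd : x c ≠ x d := fun h => hcd (inj h)
  have hxca : x c ≠ x a := fun h => hca (inj h)
  have hxcb : x c ≠ x b := fun h => hcb (inj h)
  have hxda : x d ≠ x a := fun h => hda (inj h)
  have hxdb : x d ≠ x b := fun h => hdb (inj h)
  have hE2a := E2 a
  have hE2b := E2 b
  rw [Equiv.Perm.mul_apply, Equiv.swap_apply_left] at hE2a
  rw [Equiv.Perm.mul_apply, Equiv.swap_apply_right] at hE2b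
  constructor
  · rintro i ⟨h1, h2, h3, h4⟩
    rcases eq_or_ne i a with rfl | hia
    · -- x-point at row a inside r2 : derive (d, x d) ∈ Int r1, contradict E1 d
      have hE1d := E1 d
      have t1 := tri c i d
      have t2 := tri c i b
      have t3 := tri (x c) (x i) (x d)
      have t4 := tri (x c) (x i) (x b)
      have p1 := sub_val_pos hdb.symm
      have p2 := sub_val_pos hxdb
      have nb1 : (b - c).val ≠ (d - c).val := fun h => hdb (eq_of_sub_val_eq h).symm
      have nb2 : (x b - x c).val ≠ (x d - x c).val :=
        fun h => hdb (inj (eq_of_sub_val_eq h)).symm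
      have q1 := sub_val_pos (show b ≠ c from hcb.symm)
      have q2 := sub_val_pos (show x b ≠ x c from fun h => hcb (inj h.symm))
      have q3 := sub_val_pos (show d ≠ i from hda)
      have q4 := sub_val_pos (show x d ≠ x i from hxda)
      have b1 := sub_val_lt d c
      have b2 := sub_val_lt b c
      have b3 := sub_val_lt d i
      have b4 := sub_val_lt b i
      have b5 := sub_val_lt (x d) (x c)
      have b6 := sub_val_lt (x b) (x c)
      have b7 := sub_val_lt (x d) (x i)
      have b8 := sub_val_lt (x b) (x i)
      omega
    rcases eq_or_ne i b with rfl | hib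
    · -- x-point at row b inside r2 : derive (c, x c) ∈ Int r1, contradict E1 c
      have hE1c := E1 c
      have t1 := tri a c i
      have t2 := tri (x a) (x c) (x i)
      have a1 := antisym (show a ≠ c from hca.symm)
      have a2 := antisym (show x a ≠ x c from hxca.symm)
      have p1 := sub_val_pos (show a ≠ c from hca.symm)
      have p2 := sub_val_pos (show x a ≠ x c from hxca.symm)
      have p3 := sub_val_pos (show c ≠ a from hca)
      have p4 := sub_val_pos (show x c ≠ x a from hxca)
      have nb1 : (a - c).val ≠ (d - c).val := fun h => hda (eq_of_sub_val_eq h).symm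
      have nb2 : (x a - x c).val ≠ (x d - x c).val :=
        fun h => hda (inj (eq_of_sub_val_eq h)).symm
      have b1 := sub_val_lt a c
      have b2 := sub_val_lt c a
      have b3 := sub_val_lt i a
      have b4 := sub_val_lt i c
      have b5 := sub_val_lt (x a) (x c)
      have b6 := sub_val_lt (x c) (x a)
      have b7 := sub_val_lt (x i) (x a)
      have b8 := sub_val_lt (x i) (x c)
      have b9 := sub_val_lt d c
      have b10 := sub_val_lt (x d) (x c)
      omega
    · have hE2i := E2 i
      rw [Equiv.Perm.mul_apply, Equiv.swap_apply_of_ne_of_ne hia hib] at hE2i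
      exact hE2i ⟨h1, h2, h3, h4⟩
  · rintro i ⟨h1, h2, h3, h4⟩
    rcases eq_or_ne i c with rfl | hic
    · rw [Equiv.Perm.mul_apply, Equiv.swap_apply_left] at h3 h4
      -- (c, x d) in Int r1 : derive (b, x a) ∈ Int r2(from y), contradict E2 b
      have hE1c := E1 i
      have hE1d := E1 d
      have t1 := tri a i b
      have t2 := tri a i d
      have t3 := tri (x a) (x i) (x d)
      have a2 := antisym (show x a ≠ x i from hxca.symm)
      have p1 := sub_val_pos (show b ≠ i from hcb.symm)
      have p2 := sub_val_pos (show d ≠ a from hda)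
      have p3 := sub_val_pos (show x i ≠ x a from hxca)
      have p4 := sub_val_pos (show x a ≠ x d from hxda.symm)
      have p5 := sub_val_pos (show x a ≠ x i from hxca.symm)
      have nb1 : (d - a).val ≠ (b - a).val := fun h => hdb (eq_of_sub_val_eq h)
      have nb2 : (x i - x a).val ≠ (x b - x a).val :=
        fun h => hcb (inj (eq_of_sub_val_eq h))
      have b1 := sub_val_lt b a
      have b2 := sub_val_lt d a
      have b3 := sub_val_lt b i
      have b4 := sub_val_lt d i
      have b5 := sub_val_lt (x i) (x a)
      have b6 := sub_val_lt (x a) (x i)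
      have b7 := sub_val_lt (x d) (x i)
      have b8 := sub_val_lt (x d) (x a)
      have b9 := sub_val_lt (x b) (x a)
      exact hE2b ⟨by omega, by omega, by omega, by omega⟩
    rcases eq_or_ne i d with rfl | hid
    · rw [Equiv.Perm.mul_apply, Equiv.swap_apply_right] at h3 h4
      -- (d, x c) in Int r1 : derive (a, x b) ∈ Int r2(from y), contradict E2 a
      have hE1c := E1 c
      have hE1d := E1 i
      have t1 := tri a c i
      have t2 := tri (x a) (x c) (x b)
      have t3 := tri (x a) (x c) (x i)
      have a1 := antisym (show a ≠ c from hca.symm)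
      have p1 := sub_val_pos (show c ≠ a from hca)
      have p2 := sub_val_pos (show a ≠ c from hca.symm)
      have p3 := sub_val_pos (show i ≠ c from hcd.symm)
      have p4 := sub_val_pos (show x b ≠ x c from hxcb.symm)
      have p5 := sub_val_pos (show x i ≠ x c from hxcd.symm)
      have nb1 : (c - a).val ≠ (b - a).val := fun h => hcb (eq_of_sub_val_eq h)
      have nb2 : (x i - x a).val ≠ (x b - x a).val :=
        fun h => hdb (inj (eq_of_sub_val_eq h))
      have b1 := sub_val_lt c a
      have b2 := sub_val_lt a c
      have b3 := sub_val_lt i c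
      have b4 := sub_val_lt i a
      have b5 := sub_val_lt b a
      have b6 := sub_val_lt (x c) (x a)
      have b7 := sub_val_lt (x i) (x a)
      have b8 := sub_val_lt (x b) (x a)
      have b9 := sub_val_lt (x b) (x c)
      have b10 := sub_val_lt (x i) (x c)
      exact hE2a ⟨by omega, by omega, by omega, by omega⟩
    · rw [Equiv.Perm.mul_apply, Equiv.swap_apply_of_ne_of_ne hic hid] at h3 h4
      exact E1 i ⟨h1, h2, h3, h4⟩

lemma case2 {Mk : Finset (Fin n × Fin n)} {x : Equiv.Perm (Fin n)} {a b d : Fin n}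
    (hab : a ≠ b) (had : a ≠ d) (hbd : b ≠ d)
    (W : (x a - x b).val < (x d - x b).val)
    (E1 : EmptyR x a b (x a) (x b)) (F1 : FreeR Mk a b (x a) (x b))
    (E2 : EmptyR (x * Equiv.swap a b) b d (x a) (x d))
    (F2 : FreeR Mk b d (x a) (x d)) :
    EmptyR x a d (x a) (x d) ∧ FreeR Mk a d (x a) (x d) ∧
    EmptyR (x * Equiv.swap a d) a b (x d) (x b) ∧ FreeR Mk a b (x d) (x b) ∧
    (a - d).val < (b - d).val := by
  have hxab : x a ≠ x b := fun h => hab (x.injective h)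
  have hxad : x a ≠ x d := fun h => had (x.injective h)
  have hxbd : x b ≠ x d := fun h => hbd (x.injective h)
  have hWc : (x d - x a).val < (x b - x a).val := (orient hxab hxbd hxad W).2
  have hWp : 0 < (x d - x a).val := sub_val_pos hxad.symm
  have hrow1 : (b - a).val < (d - a).val := by
    have hE1d := E1 d
    have p1 := sub_val_pos had.symm
    have p2 := sub_val_pos hbd
    have nb : (d - a).val ≠ (b - a).val := fun h => hbd (eq_of_sub_val_eq h).symm
    omega
  have condback : (a - d).val < (b - d).val := (orient hab.symm had hbd hrow1).1
  refine ⟨?_, ?_, ?_, ?_, condback⟩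
  · rintro i ⟨h1, h2, h3, h4⟩
    rcases eq_or_ne i a with hia | hia
    · rw [hia] at h1; rw [sub_self_val] at h1; omega
    rcases eq_or_ne i b with hib | hib
    · rw [hib] at h4; omega
    have hE1 := E1 i
    have hE2 := E2 i
    rw [Equiv.Perm.mul_apply, Equiv.swap_apply_of_ne_of_ne hia hib] at hE2
    have t1 := tri a b i
    have t2 := tri a b d
    have a1 := antisym hab
    have p1 := sub_val_pos hia
    have p2 := sub_val_pos hib
    have b1 := sub_val_lt i a
    have b2 := sub_val_lt i b
    have b3 := sub_val_lt b a
    have b4 := sub_val_lt d a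
    have b5 := sub_val_lt d b
    omega
  · rintro s t hst ⟨g1, g2⟩
    have hF1 := F1 s t hst
    have hF2 := F2 s t hst
    have t1 := tri a b s
    have t2 := tri a b d
    have a1 := antisym hab
    have b1 := sub_val_lt s a
    have b2 := sub_val_lt s b
    have b3 := sub_val_lt b a
    have b4 := sub_val_lt d a
    have b5 := sub_val_lt d b
    omega
  · rintro i ⟨h1, h2, h3, h4⟩
    rcases eq_or_ne i a with hia | hia
    · rw [hia, sub_self_val] at h1; omega
    rcases eq_or_ne i d with hid | hid
    · rw [hid] at h3 h4
      rw [Equiv.Perm.mul_apply, Equiv.swap_apply_right] at h3 h4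
      have a1 := antisym hxad
      have t1 := tri (x a) (x d) (x b)
      have b1 := sub_val_lt (x b) (x a)
      have b2 := sub_val_lt (x b) (x d)
      have b3 := sub_val_lt (x a) (x d)
      have b4 := sub_val_lt (x d) (x a)
      omega
    rw [Equiv.Perm.mul_apply, Equiv.swap_apply_of_ne_of_ne hia hid] at h3 h4
    have hE1 := E1 i
    have t1 := tri (x a) (x d) (x i)
    have t2 := tri (x a) (x d) (x b)
    have a1 := antisym hxad
    have b1 := sub_val_lt (x i) (x a)
    have b2 := sub_val_lt (x i) (x d)
    have b3 := sub_val_lt (x b) (x a)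
    have b4 := sub_val_lt (x b) (x d)
    have b5 := sub_val_lt (x d) (x a)
    omega
  · rintro s t hst ⟨g1, g2⟩
    have hF1 := F1 s t hst
    have t1 := tri (x a) (x d) t
    have t2 := tri (x a) (x d) (x b)
    have a1 := antisym hxad
    have b1 := sub_val_lt t (x a)
    have b2 := sub_val_lt t (x d)
    have b3 := sub_val_lt (x b) (x a)
    have b4 := sub_val_lt (x b) (x d)
    have b5 := sub_val_lt (x d) (x a)
    omega

lemma case3 {Mk : Finset (Fin n × Fin n)} {x : Equiv.Perm (Fin n)} {a b d : Fin n}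
    (hab : a ≠ b) (had : a ≠ d) (hbd : b ≠ d)
    (W : (d - b).val < (a - b).val)
    (E1 : EmptyR x a b (x a) (x b)) (F1 : FreeR Mk a b (x a) (x b))
    (E2 : EmptyR (x * Equiv.swap a b) a d (x b) (x d))
    (F2 : FreeR Mk a d (x b) (x d)) :
    EmptyR x b d (x b) (x d) ∧ FreeR Mk b d (x b) (x d) ∧
    EmptyR (x * Equiv.swap b d) a b (x a) (x d) ∧ FreeR Mk a b (x a) (x d) ∧
    (x b - x a).val < (x d - x a).val := by
  have hxab : x a ≠ x b := fun h => hab (x.injective h)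
  have hxad : x a ≠ x d := fun h => had (x.injective h)
  have hxbd : x b ≠ x d := fun h => hbd (x.injective h)
  -- b strictly inside (a, d) in rows
  have hW : (b - a).val < (d - a).val := (orient hbd.symm hab.symm had.symm W).1
  have hWp : 0 < (b - a).val := sub_val_pos hab.symm
  -- x b strictly inside (x a, x d) in columns, via E2 at b
  have hxb : (x b - x a).val < (x d - x a).val := by
    have hE2b := E2 b
    rw [Equiv.Perm.mul_apply, Equiv.swap_apply_right] at hE2b
    have p1 := sub_val_pos hxab.symm
    have p2 := sub_val_pos hxad.symm
    have p3 := sub_val_pos hxbd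
    have nb : (x a - x b).val ≠ (x d - x b).val :=
      fun h => had (x.injective (eq_of_sub_val_eq h))
    have t1 := tri (x b) (x a) (x d)
    have a1 := antisym hxab
    have a2 := antisym hxbd
    have b1 := sub_val_lt (x a) (x b)
    have b2 := sub_val_lt (x d) (x b)
    have b3 := sub_val_lt (x b) (x a)
    have b4 := sub_val_lt (x d) (x a)
    omega
  refine ⟨?_, ?_, ?_, ?_, hxb⟩
  · rintro i ⟨h1, h2, h3, h4⟩
    rcases eq_or_ne i a with hia | hia
    · rw [hia] at h2; omega
    rcases eq_or_ne i b with hib | hib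
    · rw [hib, sub_self_val] at h1; omega
    have hE2 := E2 i
    rw [Equiv.Perm.mul_apply, Equiv.swap_apply_of_ne_of_ne hia hib] at hE2
    have t1 := tri a b i
    have t2 := tri a b d
    have a1 := antisym hab
    have p1 := sub_val_pos hia
    have b1 := sub_val_lt i a
    have b2 := sub_val_lt i b
    have b3 := sub_val_lt b a
    have b4 := sub_val_lt d a
    have b5 := sub_val_lt d b
    omega
  · rintro s t hst ⟨g1, g2⟩
    have hF2 := F2 s t hst
    have t1 := tri a b s
    have t2 := tri a b d
    have a1 := antisym hab
    have b1 := sub_val_lt s a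
    have b2 := sub_val_lt s b
    have b3 := sub_val_lt b a
    have b4 := sub_val_lt d a
    have b5 := sub_val_lt d b
    omega
  · rintro i ⟨h1, h2, h3, h4⟩
    rcases eq_or_ne i b with hib | hib
    · rw [hib] at h2; omega
    rcases eq_or_ne i d with hid | hid
    · rw [hid] at h2; omega
    rw [Equiv.Perm.mul_apply, Equiv.swap_apply_of_ne_of_ne hib hid] at h3 h4
    rcases eq_or_ne i a with hia | hia
    · rw [hia, sub_self_val] at h1; omega
    have hE1 := E1 i
    have hE2 := E2 i
    rw [Equiv.Perm.mul_apply, Equiv.swap_apply_of_ne_of_ne hia hib] at hE2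
    have hxia : x i ≠ x a := fun h => hia (x.injective h)
    have hxib : x i ≠ x b := fun h => hib (x.injective h)
    have t1 := tri (x a) (x b) (x i)
    have t2 := tri (x a) (x b) (x d)
    have t3 := tri a b d
    have a1 := antisym hxab
    have p1 := sub_val_pos hxia
    have p2 := sub_val_pos hxib
    have b1 := sub_val_lt (x i) (x a)
    have b2 := sub_val_lt (x i) (x b)
    have b3 := sub_val_lt (x b) (x a)
    have b4 := sub_val_lt (x d) (x a)
    have b5 := sub_val_lt (x d) (x b)
    have b6 := sub_val_lt d a
    have b7 := sub_val_lt d b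
    have b8 := sub_val_lt b a
    omega
  · rintro s t hst ⟨g1, g2⟩
    have hF1 := F1 s t hst
    have hF2 := F2 s t hst
    have t1 := tri (x a) (x b) t
    have t2 := tri (x a) (x b) (x d)
    have t3 := tri a b d
    have a1 := antisym hxab
    have b1 := sub_val_lt t (x a)
    have b2 := sub_val_lt t (x b)
    have b3 := sub_val_lt (x b) (x a)
    have b4 := sub_val_lt (x d) (x a)
    have b5 := sub_val_lt (x d) (x b)
    have b6 := sub_val_lt d a
    have b7 := sub_val_lt d b
    have b8 := sub_val_lt b a
    omega

lemma case4 {Mk : Finset (Fin n × Fin n)} {x : Equiv.Perm (Fin n)} {a b d : Fin n}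
    (hab : a ≠ b) (had : a ≠ d) (hbd : b ≠ d)
    (W : (x d - x b).val < (x a - x b).val)
    (E1 : EmptyR x a b (x a) (x b)) (F1 : FreeR Mk a b (x a) (x b))
    (E2 : EmptyR (x * Equiv.swap a b) b d (x a) (x d))
    (F2 : FreeR Mk b d (x a) (x d)) :
    EmptyR x b d (x b) (x d) ∧ FreeR Mk b d (x b) (x d) ∧
    EmptyR (x * Equiv.swap b d) a d (x a) (x b) ∧ FreeR Mk a d (x a) (x b) ∧
    (b - a).val < (d - a).val := by
  have hxab : x a ≠ x b := fun h => hab (x.injective h)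
  have hxad : x a ≠ x d := fun h => had (x.injective h)
  have hxbd : x b ≠ x d := fun h => hbd (x.injective h)
  -- x b inside (x a, x d) in columns
  have hWc : (x b - x a).val < (x d - x a).val := (orient hxbd.symm hxab.symm hxad.symm W).1
  have hWcp : 0 < (x b - x a).val := sub_val_pos hxab.symm
  -- condback : b inside (a, d) in rows, via E2 at a
  have condback : (b - a).val < (d - a).val := by
    have hE2a := E2 a
    rw [Equiv.Perm.mul_apply, Equiv.swap_apply_left] at hE2a
    have t1 := tri b a d
    have a1 := antisym hab
    have p1 := sub_val_pos hab.symm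
    have p2 := sub_val_pos hab
    have p3 := sub_val_pos hbd
    have p4 := sub_val_pos hbd.symm
    have p5 := sub_val_pos had.symm
    have nb : (a - b).val ≠ (d - b).val := fun h => had (eq_of_sub_val_eq h)
    have b1 := sub_val_lt a b
    have b2 := sub_val_lt d b
    have b3 := sub_val_lt b a
    have b4 := sub_val_lt d a
    omega
  refine ⟨?_, ?_, ?_, ?_, condback⟩
  · rintro i ⟨h1, h2, h3, h4⟩
    rcases eq_or_ne i a with hia | hia
    · rw [hia] at h4; omega
    rcases eq_or_ne i b with hib | hib
    · rw [hib, sub_self_val] at h1; omega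
    have hE2 := E2 i
    rw [Equiv.Perm.mul_apply, Equiv.swap_apply_of_ne_of_ne hia hib] at hE2
    have t1 := tri (x a) (x b) (x i)
    have t2 := tri (x a) (x b) (x d)
    have a1 := antisym hxab
    have hxia : x i ≠ x a := fun h => hia (x.injective h)
    have p1 := sub_val_pos hxia
    have b1 := sub_val_lt (x i) (x a)
    have b2 := sub_val_lt (x i) (x b)
    have b3 := sub_val_lt (x b) (x a)
    have b4 := sub_val_lt (x d) (x a)
    have b5 := sub_val_lt (x d) (x b)
    omega
  · rintro s t hst ⟨g1, g2⟩
    have hF2 := F2 s t hst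
    have t1 := tri (x a) (x b) t
    have t2 := tri (x a) (x b) (x d)
    have a1 := antisym hxab
    have b1 := sub_val_lt t (x a)
    have b2 := sub_val_lt t (x b)
    have b3 := sub_val_lt (x b) (x a)
    have b4 := sub_val_lt (x d) (x a)
    have b5 := sub_val_lt (x d) (x b)
    omega
  · rintro i ⟨h1, h2, h3, h4⟩
    rcases eq_or_ne i d with hid | hid
    · rw [hid] at h2; omega
    rcases eq_or_ne i b with hib | hib
    · rw [hib] at h3 h4
      rw [Equiv.Perm.mul_apply, Equiv.swap_apply_left] at h3 h4
      omega
    rw [Equiv.Perm.mul_apply, Equiv.swap_apply_of_ne_of_ne hib hid] at h3 h4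
    rcases eq_or_ne i a with hia | hia
    · rw [hia, sub_self_val] at h1; omega
    have hE1 := E1 i
    have hE2 := E2 i
    rw [Equiv.Perm.mul_apply, Equiv.swap_apply_of_ne_of_ne hia hib] at hE2
    have t1 := tri a b i
    have t2 := tri a b d
    have a1 := antisym hab
    have p1 := sub_val_pos hia
    have p2 := sub_val_pos hib
    have b1 := sub_val_lt i a
    have b2 := sub_val_lt i b
    have b3 := sub_val_lt b a
    have b4 := sub_val_lt d a
    have b5 := sub_val_lt d b
    omega
  · rintro s t hst ⟨g1, g2⟩
    have hF1 := F1 s t hst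
    have hF2 := F2 s t hst
    have t1 := tri a b s
    have t2 := tri a b d
    have a1 := antisym hab
    have b1 := sub_val_lt s a
    have b2 := sub_val_lt s b
    have b3 := sub_val_lt b a
    have b4 := sub_val_lt d a
    have b5 := sub_val_lt d b
    omega

lemma case5 {Mk : Finset (Fin n × Fin n)} {x : Equiv.Perm (Fin n)} {a b c : Fin n}
    (hab : a ≠ b) (hca : c ≠ a) (hcb : c ≠ b)
    (V : (x a - x c).val < (x b - x c).val)
    (E1 : EmptyR x a b (x a) (x b)) (F1 : FreeR Mk a b (x a) (x b))
    (E2 : EmptyR (x * Equiv.swap a b) c a (x c) (x b))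
    (F2 : FreeR Mk c a (x c) (x b)) :
    EmptyR x c a (x c) (x a) ∧ FreeR Mk c a (x c) (x a) ∧
    EmptyR (x * Equiv.swap c a) c b (x a) (x b) ∧ FreeR Mk c b (x a) (x b) ∧
    (b - a).val < (c - a).val := by
  have hxab : x a ≠ x b := fun h => hab (x.injective h)
  have hxca : x c ≠ x a := fun h => hca (x.injective h)
  have hxcb : x c ≠ x b := fun h => hcb (x.injective h)
  have hrows : (a - c).val < (b - c).val := by
    have hE2b := E2 b
    rw [Equiv.Perm.mul_apply, Equiv.swap_apply_right] at hE2b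
    have p1 := sub_val_pos (show b ≠ c from hcb.symm)
    have p2 := sub_val_pos (show a ≠ c from hca.symm)
    have p3 := sub_val_pos (show x a ≠ x c from hxca.symm)
    have nb : (b - c).val ≠ (a - c).val := fun h => hab (eq_of_sub_val_eq h).symm
    omega
  have condback : (b - a).val < (c - a).val := (orient hca.symm hcb hab hrows).2
  refine ⟨?_, ?_, ?_, ?_, condback⟩
  · rintro i ⟨h1, h2, h3, h4⟩
    rcases eq_or_ne i b with hib | hib
    · rw [hib] at h3 h4; omega
    rcases eq_or_ne i c with hic | hic
    · rw [hic, sub_self_val] at h1; omega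
    rcases eq_or_ne i a with hia | hia
    · rw [hia] at h2; omega
    have hE2 := E2 i
    rw [Equiv.Perm.mul_apply, Equiv.swap_apply_of_ne_of_ne hia hib] at hE2
    omega
  · rintro s t hst ⟨g1, g2⟩
    have hF2 := F2 s t hst
    omega
  · rintro i ⟨h1, h2, h3, h4⟩
    rcases eq_or_ne i c with hic | hic
    · rw [hic] at h3
      rw [Equiv.Perm.mul_apply, Equiv.swap_apply_left, sub_self_val] at h3; omega
    rcases eq_or_ne i a with hia | hia
    · rw [hia] at h3 h4
      rw [Equiv.Perm.mul_apply, Equiv.swap_apply_right] at h3 h4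
      have a1 := antisym hxca
      have t1 := tri (x c) (x a) (x b)
      have b1 := sub_val_lt (x b) (x c)
      have b2 := sub_val_lt (x b) (x a)
      have b3 := sub_val_lt (x c) (x a)
      have b4 := sub_val_lt (x a) (x c)
      omega
    rw [Equiv.Perm.mul_apply, Equiv.swap_apply_of_ne_of_ne hic hia] at h3 h4
    have hib : i ≠ b := fun h => by rw [h] at h2; omega
    have hE1 := E1 i
    have hE2 := E2 i
    rw [Equiv.Perm.mul_apply, Equiv.swap_apply_of_ne_of_ne hia hib] at hE2
    have t1 := tri c a i
    have t2 := tri c a b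
    have t3 := tri (x c) (x a) (x i)
    have t4 := tri (x c) (x a) (x b)
    have a1 := antisym hca
    have a2 := antisym hxca
    have p1 := sub_val_pos hia
    have p2 := sub_val_pos (show x i ≠ x a from fun h => hia (x.injective h))
    have b1 := sub_val_lt i c
    have b2 := sub_val_lt i a
    have b3 := sub_val_lt b c
    have b4 := sub_val_lt b a
    have b5 := sub_val_lt a c
    have b6 := sub_val_lt c a
    have b7 := sub_val_lt (x i) (x c)
    have b8 := sub_val_lt (x i) (x a)
    have b9 := sub_val_lt (x b) (x c)
    have b10 := sub_val_lt (x b) (x a)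
    have b11 := sub_val_lt (x a) (x c)
    omega
  · rintro s t hst ⟨g1, g2⟩
    have hF1 := F1 s t hst
    have hF2 := F2 s t hst
    have t1 := tri c a s
    have t2 := tri c a b
    have t3 := tri (x c) (x a) t
    have t4 := tri (x c) (x a) (x b)
    have a1 := antisym hca
    have a2 := antisym hxca
    have b1 := sub_val_lt s c
    have b2 := sub_val_lt s a
    have b3 := sub_val_lt b c
    have b4 := sub_val_lt b a
    have b5 := sub_val_lt a c
    have b6 := sub_val_lt c a
    have b7 := sub_val_lt t (x c)
    have b8 := sub_val_lt t (x a)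
    have b9 := sub_val_lt (x b) (x c)
    have b10 := sub_val_lt (x b) (x a)
    have b11 := sub_val_lt (x a) (x c)
    omega

lemma case6 {Mk : Finset (Fin n × Fin n)} {x : Equiv.Perm (Fin n)} {a b c : Fin n}
    (hab : a ≠ b) (hca : c ≠ a) (hcb : c ≠ b)
    (W : (x b - x c).val < (x a - x c).val)
    (E1 : EmptyR x a b (x a) (x b)) (F1 : FreeR Mk a b (x a) (x b))
    (E2 : EmptyR (x * Equiv.swap a b) c a (x c) (x b))
    (F2 : FreeR Mk c a (x c) (x b)) :
    EmptyR x c b (x c) (x b) ∧ FreeR Mk c b (x c) (x b) ∧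
    EmptyR (x * Equiv.swap c b) a b (x a) (x c) ∧ FreeR Mk a b (x a) (x c) ∧
    (b - a).val < (c - a).val := by
  have hxab : x a ≠ x b := fun h => hab (x.injective h)
  have hxca : x c ≠ x a := fun h => hca (x.injective h)
  have hxcb : x c ≠ x b := fun h => hcb (x.injective h)
  have hxc : (x c - x a).val < (x b - x a).val :=
    (orient hxcb.symm hxca hxab.symm W).1
  have condback : (b - a).val < (c - a).val := by
    have hE1c := E1 c
    have p1 := sub_val_pos hca
    have p2 := sub_val_pos hxca
    have nb : (c - a).val ≠ (b - a).val := fun h => hcb (eq_of_sub_val_eq h)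
    omega
  refine ⟨?_, ?_, ?_, ?_, condback⟩
  · rintro i ⟨h1, h2, h3, h4⟩
    rcases eq_or_ne i a with hia | hia
    · rw [hia] at h3 h4; omega
    rcases eq_or_ne i c with hic | hic
    · rw [hic, sub_self_val] at h1; omega
    rcases eq_or_ne i b with hib | hib
    · rw [hib] at h2; omega
    have hE1 := E1 i
    have hE2 := E2 i
    rw [Equiv.Perm.mul_apply, Equiv.swap_apply_of_ne_of_ne hia hib] at hE2
    have t1 := tri c a i
    have t2 := tri c a b
    have t3 := tri (x a) (x c) (x i)
    have t4 := tri (x a) (x c) (x b)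
    have a1 := antisym hca
    have a2 := antisym hxca
    have p1 := sub_val_pos hia
    have p2 := sub_val_pos (show x i ≠ x a from fun h => hia (x.injective h))
    have b1 := sub_val_lt i c
    have b2 := sub_val_lt i a
    have b3 := sub_val_lt b c
    have b4 := sub_val_lt b a
    have b5 := sub_val_lt a c
    have b6 := sub_val_lt c a
    have b7 := sub_val_lt (x i) (x c)
    have b8 := sub_val_lt (x i) (x a)
    have b9 := sub_val_lt (x b) (x c)
    have b10 := sub_val_lt (x b) (x a)
    have b11 := sub_val_lt (x c) (x a)
    have b12 := sub_val_lt (x a) (x c)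
    omega
  · rintro s t hst ⟨g1, g2⟩
    have hF1 := F1 s t hst
    have hF2 := F2 s t hst
    have t1 := tri c a s
    have t2 := tri c a b
    have t3 := tri (x a) (x c) t
    have t4 := tri (x a) (x c) (x b)
    have a1 := antisym hca
    have a2 := antisym hxca
    have b1 := sub_val_lt s c
    have b2 := sub_val_lt s a
    have b3 := sub_val_lt b c
    have b4 := sub_val_lt b a
    have b5 := sub_val_lt a c
    have b6 := sub_val_lt c a
    have b7 := sub_val_lt t (x c)
    have b8 := sub_val_lt t (x a)
    have b9 := sub_val_lt (x b) (x c)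
    have b10 := sub_val_lt (x b) (x a)
    have b11 := sub_val_lt (x c) (x a)
    have b12 := sub_val_lt (x a) (x c)
    omega
  · rintro i ⟨h1, h2, h3, h4⟩
    rcases eq_or_ne i b with hib | hib
    · rw [hib] at h3 h4
      rw [Equiv.Perm.mul_apply, Equiv.swap_apply_right] at h3 h4; omega
    rcases eq_or_ne i c with hic | hic
    · rw [hic] at h3 h4
      rw [Equiv.Perm.mul_apply, Equiv.swap_apply_left] at h3 h4; omega
    rw [Equiv.Perm.mul_apply, Equiv.swap_apply_of_ne_of_ne hic hib] at h3 h4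
    have hE1 := E1 i
    omega
  · rintro s t hst ⟨g1, g2⟩
    have hF1 := F1 s t hst
    omega

lemma case7 {Mk : Finset (Fin n × Fin n)} {x : Equiv.Perm (Fin n)} {a b c : Fin n}
    (hab : a ≠ b) (hca : c ≠ a) (hcb : c ≠ b)
    (U : (a - c).val < (b - c).val)
    (E1 : EmptyR x a b (x a) (x b)) (F1 : FreeR Mk a b (x a) (x b))
    (E2 : EmptyR (x * Equiv.swap a b) c b (x c) (x a))
    (F2 : FreeR Mk c b (x c) (x a)) :
    EmptyR x c a (x c) (x a) ∧ FreeR Mk c a (x c) (x a) ∧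
    EmptyR (x * Equiv.swap c a) a b (x c) (x b) ∧ FreeR Mk a b (x c) (x b) ∧
    (x b - x a).val < (x c - x a).val := by
  have hxab : x a ≠ x b := fun h => hab (x.injective h)
  have hxca : x c ≠ x a := fun h => hca (x.injective h)
  have hxcb : x c ≠ x b := fun h => hcb (x.injective h)
  have hxb7 : (x a - x c).val < (x b - x c).val := by
    have hE2a := E2 a
    rw [Equiv.Perm.mul_apply, Equiv.swap_apply_left] at hE2a
    have p1 := sub_val_pos (show a ≠ c from hca.symm)
    have p2 := sub_val_pos (show x b ≠ x c from hxcb.symm)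
    have p3 := sub_val_pos (show x a ≠ x c from hxca.symm)
    have nb : (x b - x c).val ≠ (x a - x c).val :=
      fun h => hab (x.injective (eq_of_sub_val_eq h)).symm
    omega
  have condback : (x b - x a).val < (x c - x a).val :=
    (orient hxca.symm hxcb hxab hxb7).2
  refine ⟨?_, ?_, ?_, ?_, condback⟩
  · rintro i ⟨h1, h2, h3, h4⟩
    rcases eq_or_ne i b with hib | hib
    · rw [hib] at h2; omega
    rcases eq_or_ne i c with hic | hic
    · rw [hic, sub_self_val] at h1; omega
    rcases eq_or_ne i a with hia | hia
    · rw [hia] at h2; omega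
    have hE2 := E2 i
    rw [Equiv.Perm.mul_apply, Equiv.swap_apply_of_ne_of_ne hia hib] at hE2
    omega
  · rintro s t hst ⟨g1, g2⟩
    have hF2 := F2 s t hst
    omega
  · rintro i ⟨h1, h2, h3, h4⟩
    rcases eq_or_ne i a with hia | hia
    · rw [hia] at h3
      rw [Equiv.Perm.mul_apply, Equiv.swap_apply_right, sub_self_val] at h3; omega
    rcases eq_or_ne i c with hic | hic
    · rw [hic] at h1 h2
      have t1 := tri c a b
      have a1 := antisym hca
      have b1 := sub_val_lt b c
      have b2 := sub_val_lt b a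
      have b3 := sub_val_lt a c
      have b4 := sub_val_lt c a
      omega
    rw [Equiv.Perm.mul_apply, Equiv.swap_apply_of_ne_of_ne hic hia] at h3 h4
    have hib : i ≠ b := fun h => by rw [h] at h2; omega
    have hE1 := E1 i
    have hE2 := E2 i
    rw [Equiv.Perm.mul_apply, Equiv.swap_apply_of_ne_of_ne hia hib] at hE2
    have t1 := tri c a i
    have t2 := tri c a b
    have t3 := tri (x c) (x a) (x i)
    have t4 := tri (x c) (x a) (x b)
    have a1 := antisym hca
    have a2 := antisym hxca
    have p1 := sub_val_pos hia
    have p2 := sub_val_pos (show x i ≠ x a from fun h => hia (x.injective h))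
    have b1 := sub_val_lt i c
    have b2 := sub_val_lt i a
    have b3 := sub_val_lt b c
    have b4 := sub_val_lt b a
    have b5 := sub_val_lt a c
    have b6 := sub_val_lt c a
    have b7 := sub_val_lt (x i) (x c)
    have b8 := sub_val_lt (x i) (x a)
    have b9 := sub_val_lt (x b) (x c)
    have b10 := sub_val_lt (x b) (x a)
    have b11 := sub_val_lt (x a) (x c)
    omega
  · rintro s t hst ⟨g1, g2⟩
    have hF1 := F1 s t hst
    have hF2 := F2 s t hst
    have t1 := tri c a s
    have t2 := tri c a b
    have t3 := tri (x c) (x a) t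
    have t4 := tri (x c) (x a) (x b)
    have a1 := antisym hca
    have a2 := antisym hxca
    have b1 := sub_val_lt s c
    have b2 := sub_val_lt s a
    have b3 := sub_val_lt b c
    have b4 := sub_val_lt b a
    have b5 := sub_val_lt a c
    have b6 := sub_val_lt c a
    have b7 := sub_val_lt t (x c)
    have b8 := sub_val_lt t (x a)
    have b9 := sub_val_lt (x b) (x c)
    have b10 := sub_val_lt (x b) (x a)
    have b11 := sub_val_lt (x a) (x c)
    omega

lemma case8 {Mk : Finset (Fin n × Fin n)} {x : Equiv.Perm (Fin n)} {a b c : Fin n}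
    (hab : a ≠ b) (hca : c ≠ a) (hcb : c ≠ b)
    (W : (b - c).val < (a - c).val)
    (E1 : EmptyR x a b (x a) (x b)) (F1 : FreeR Mk a b (x a) (x b))
    (E2 : EmptyR (x * Equiv.swap a b) c b (x c) (x a))
    (F2 : FreeR Mk c b (x c) (x a)) :
    EmptyR x c b (x c) (x b) ∧ FreeR Mk c b (x c) (x b) ∧
    EmptyR (x * Equiv.swap c b) a c (x a) (x b) ∧ FreeR Mk a c (x a) (x b) ∧
    (x b - x a).val < (x c - x a).val := by
  have hxab : x a ≠ x b := fun h => hab (x.injective h)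
  have hxca : x c ≠ x a := fun h => hca (x.injective h)
  have hxcb : x c ≠ x b := fun h => hcb (x.injective h)
  have hc8 : (c - a).val < (b - a).val := (orient hcb.symm hca hab.symm W).1
  have condback : (x b - x a).val < (x c - x a).val := by
    have hE1c := E1 c
    have p1 := sub_val_pos hca
    have p2 := sub_val_pos hxca
    have nb : (x c - x a).val ≠ (x b - x a).val :=
      fun h => hcb (x.injective (eq_of_sub_val_eq h))
    omega
  have hx8 : (x a - x c).val < (x b - x c).val :=
    (orient hxab.symm hxca.symm hxcb.symm condback).1
  refine ⟨?_, ?_, ?_, ?_, condback⟩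
  · rintro i ⟨h1, h2, h3, h4⟩
    rcases eq_or_ne i a with hia | hia
    · rw [hia] at h2; omega
    rcases eq_or_ne i c with hic | hic
    · rw [hic, sub_self_val] at h1; omega
    rcases eq_or_ne i b with hib | hib
    · rw [hib] at h2; omega
    have hE1 := E1 i
    have hE2 := E2 i
    rw [Equiv.Perm.mul_apply, Equiv.swap_apply_of_ne_of_ne hia hib] at hE2
    have t1 := tri a c i
    have t2 := tri a c b
    have t3 := tri (x c) (x a) (x i)
    have t4 := tri (x c) (x a) (x b)
    have a1 := antisym hca
    have a2 := antisym hxca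
    have p1 := sub_val_pos hia
    have p2 := sub_val_pos (show x i ≠ x a from fun h => hia (x.injective h))
    have b1 := sub_val_lt i c
    have b2 := sub_val_lt i a
    have b3 := sub_val_lt b c
    have b4 := sub_val_lt b a
    have b5 := sub_val_lt a c
    have b6 := sub_val_lt c a
    have b7 := sub_val_lt (x i) (x c)
    have b8 := sub_val_lt (x i) (x a)
    have b9 := sub_val_lt (x b) (x c)
    have b10 := sub_val_lt (x b) (x a)
    have b11 := sub_val_lt (x a) (x c)
    have b12 := sub_val_lt (x c) (x a)
    omega
  · rintro s t hst ⟨g1, g2⟩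
    have hF1 := F1 s t hst
    have hF2 := F2 s t hst
    have t1 := tri a c s
    have t2 := tri a c b
    have t3 := tri (x c) (x a) t
    have t4 := tri (x c) (x a) (x b)
    have a1 := antisym hca
    have a2 := antisym hxca
    have b1 := sub_val_lt s c
    have b2 := sub_val_lt s a
    have b3 := sub_val_lt b c
    have b4 := sub_val_lt b a
    have b5 := sub_val_lt a c
    have b6 := sub_val_lt c a
    have b7 := sub_val_lt t (x c)
    have b8 := sub_val_lt t (x a)
    have b9 := sub_val_lt (x b) (x c)
    have b10 := sub_val_lt (x b) (x a)
    have b11 := sub_val_lt (x a) (x c)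
    have b12 := sub_val_lt (x c) (x a)
    omega
  · rintro i ⟨h1, h2, h3, h4⟩
    rcases eq_or_ne i c with hic | hic
    · rw [hic] at h2; omega
    rcases eq_or_ne i b with hib | hib
    · rw [hib] at h2; omega
    rw [Equiv.Perm.mul_apply, Equiv.swap_apply_of_ne_of_ne hic hib] at h3 h4
    have hE1 := E1 i
    omega
  · rintro s t hst ⟨g1, g2⟩
    have hF1 := F1 s t hst
    omega

def Qp {n : ℕ} (Mk : Finset (Fin n × Fin n)) (x y : Equiv.Perm (Fin n))
    (ab : Fin n × Fin n) : Prop :=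
  ab.1 ≠ ab.2 ∧ (∀ i, y i = x (Equiv.swap ab.1 ab.2 i)) ∧
  EmptyR x ab.1 ab.2 (x ab.1) (x ab.2) ∧ FreeR Mk ab.1 ab.2 (x ab.1) (x ab.2)

def P2 {n : ℕ} (Mk : Finset (Fin n × Fin n)) (x z : Equiv.Perm (Fin n))
    (t : (Fin n × Fin n) × (Fin n × Fin n)) : Prop :=
  Qp Mk x (x * Equiv.swap t.1.1 t.1.2) t.1 ∧
  Qp Mk (x * Equiv.swap t.1.1 t.1.2) z t.2

def Fm {n : ℕ} (x : Equiv.Perm (Fin n)) :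
    (Fin n × Fin n) × (Fin n × Fin n) → (Fin n × Fin n) × (Fin n × Fin n)
  | ((a,b),(c,d)) =>
    if c = a ∧ d = b then ((a,b),(c,d))
    else if c = b ∧ d = a then ((a,b),(c,d))
    else if c = a then
      (if (a-b).val < (d-b).val then ((a,d),(d,b)) else ((b,d),(a,b)))
    else if c = b then
      (if (x a - x b).val < (x d - x b).val then ((a,d),(a,b)) else ((b,d),(a,d)))
    else if d = a then
      (if (x a - x c).val < (x b - x c).val then ((c,a),(c,b)) else ((c,b),(a,b)))
    else if d = b then
      (if (a-c).val < (b-c).val then ((c,a),(a,b)) else ((c,b),(a,c)))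
    else ((c,d),(a,b))

lemma step {n : ℕ} {Mk : Finset (Fin n × Fin n)} {x z : Equiv.Perm (Fin n)}
    (hrow : ∀ s : Fin n, ∃ t : Fin n, (s, t) ∈ Mk)
    (hcol : ∀ t : Fin n, ∃ s : Fin n, (s, t) ∈ Mk)
    (t : (Fin n × Fin n) × (Fin n × Fin n)) (ht : P2 Mk x z t) :
    P2 Mk x z (Fm x t) ∧ Fm x (Fm x t) = t ∧ Fm x t ≠ t := by
  obtain ⟨⟨a, b⟩, ⟨c, d⟩⟩ := t
  haveI : NeZero n := ⟨(Fin.pos a).ne'⟩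
  obtain ⟨⟨hab, -, E1, F1⟩, ⟨hcd, hz2, E2, F2⟩⟩ := ht
  simp only at hab hcd hz2 E1 F1 E2 F2
  by_cases h1 : c = a ∧ d = b
  · exfalso
    obtain ⟨hc, hd⟩ := h1
    rw [hc, hd] at E2 F2
    rw [show (x * Equiv.swap a b) a = x b from congrArg x (Equiv.swap_apply_left a b),
        show (x * Equiv.swap a b) b = x a from congrArg x (Equiv.swap_apply_right a b)] at E2 F2
    exact ann1 hrow hab E1 F1 E2 F2
  by_cases h2 : c = b ∧ d = a
  · exfalso
    obtain ⟨hc, hd⟩ := h2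
    rw [hc, hd] at E2 F2
    rw [show (x * Equiv.swap a b) b = x a from congrArg x (Equiv.swap_apply_right a b),
        show (x * Equiv.swap a b) a = x b from congrArg x (Equiv.swap_apply_left a b)] at E2 F2
    exact ann2 hcol hab E1 F1 E2 F2
  by_cases h3 : c = a
  · have hdb : d ≠ b := fun h => h1 ⟨h3, h⟩
    have had : a ≠ d := by rw [h3] at hcd; exact hcd
    have hbd : b ≠ d := Ne.symm hdb
    rw [h3] at E2 F2 hz2
    rw [show (x * Equiv.swap a b) a = x b from congrArg x (Equiv.swap_apply_left a b),
        show (x * Equiv.swap a b) d = x d from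
          congrArg x (Equiv.swap_apply_of_ne_of_ne had.symm hbd.symm)] at E2 F2
    by_cases W : (a - b).val < (d - b).val
    · obtain ⟨E1', F1', E2', F2', cb⟩ := case1 hab had hbd W E1 F1 E2 F2
      have hFm : Fm x ((a,b),(c,d)) = ((a,d),(d,b)) := by
        simp only [Fm]; rw [if_neg h1, if_neg h2, if_pos h3, if_pos W]
      refine ⟨?_, ?_, ?_⟩
      · rw [hFm]
        refine ⟨⟨had, fun i => rfl, E1', F1'⟩, ⟨hdb, ?_, ?_, ?_⟩⟩
        · intro i
          rw [hz2 i]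
          exact congrArg x (by rw [Equiv.swap_comm a b]; exact cyc hab.symm had hbd i)
        · rw [show (x * Equiv.swap a d) d = x a from congrArg x (Equiv.swap_apply_right a d),
              show (x * Equiv.swap a d) b = x b from
                congrArg x (Equiv.swap_apply_of_ne_of_ne hab.symm hbd)]
          exact E2'
        · rw [show (x * Equiv.swap a d) d = x a from congrArg x (Equiv.swap_apply_right a d),
              show (x * Equiv.swap a d) b = x b from
                congrArg x (Equiv.swap_apply_of_ne_of_ne hab.symm hbd)]
          exact F2'
      · rw [hFm]
        simp only [Fm]
        split_ifs <;> first | simp_all | omega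
      · rw [hFm]
        intro hEq
        exact hdb (congrArg (fun p => p.1.2) hEq)
    · have nb : (a - b).val ≠ (d - b).val := fun h => had (eq_of_sub_val_eq h)
      have W3 : (d - b).val < (a - b).val := by omega
      obtain ⟨E1', F1', E2', F2', cb⟩ := case3 hab had hbd W3 E1 F1 E2 F2
      have hFm : Fm x ((a,b),(c,d)) = ((b,d),(a,b)) := by
        simp only [Fm]; rw [if_neg h1, if_neg h2, if_pos h3, if_neg W]
      refine ⟨?_, ?_, ?_⟩
      · rw [hFm]
        refine ⟨⟨hbd, fun i => rfl, E1', F1'⟩, ⟨hab, ?_, ?_, ?_⟩⟩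
        · intro i
          rw [hz2 i]
          refine congrArg x ?_
          have hc := cyc' hab.symm had hbd i
          rw [Equiv.swap_comm b a, Equiv.swap_comm d b] at hc
          exact hc
        · rw [show (x * Equiv.swap b d) a = x a from
                congrArg x (Equiv.swap_apply_of_ne_of_ne hab had),
              show (x * Equiv.swap b d) b = x d from congrArg x (Equiv.swap_apply_left b d)]
          exact E2'
        · rw [show (x * Equiv.swap b d) a = x a from
                congrArg x (Equiv.swap_apply_of_ne_of_ne hab had),
              show (x * Equiv.swap b d) b = x d from congrArg x (Equiv.swap_apply_left b d)]
          exact F2'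
      · rw [hFm]
        simp only [Fm]
        split_ifs <;> first | simp_all | omega
      · rw [hFm]
        intro hEq
        exact hab (congrArg (fun p => p.1.1) hEq).symm
  by_cases h4 : c = b
  · have hda : d ≠ a := fun h => h2 ⟨h4, h⟩
    have had : a ≠ d := Ne.symm hda
    have hbd : b ≠ d := by rw [h4] at hcd; exact hcd
    rw [h4] at E2 F2 hz2
    rw [show (x * Equiv.swap a b) b = x a from congrArg x (Equiv.swap_apply_right a b),
        show (x * Equiv.swap a b) d = x d from
          congrArg x (Equiv.swap_apply_of_ne_of_ne had.symm hbd.symm)] at E2 F2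
    by_cases W : (x a - x b).val < (x d - x b).val
    · obtain ⟨E1', F1', E2', F2', cb⟩ := case2 hab had hbd W E1 F1 E2 F2
      have hFm : Fm x ((a,b),(c,d)) = ((a,d),(a,b)) := by
        simp only [Fm]; rw [if_neg h1, if_neg h2, if_neg h3, if_pos h4, if_pos W]
      refine ⟨?_, ?_, ?_⟩
      · rw [hFm]
        refine ⟨⟨had, fun i => rfl, E1', F1'⟩, ⟨hab, ?_, ?_, ?_⟩⟩
        · intro i
          rw [hz2 i]
          refine congrArg x ?_
          have hc := cyc' hab hbd had i
          rw [Equiv.swap_comm d a] at hc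
          exact hc
        · rw [show (x * Equiv.swap a d) a = x d from congrArg x (Equiv.swap_apply_left a d),
              show (x * Equiv.swap a d) b = x b from
                congrArg x (Equiv.swap_apply_of_ne_of_ne hab.symm hbd)]
          exact E2'
        · rw [show (x * Equiv.swap a d) a = x d from congrArg x (Equiv.swap_apply_left a d),
              show (x * Equiv.swap a d) b = x b from
                congrArg x (Equiv.swap_apply_of_ne_of_ne hab.symm hbd)]
          exact F2'
      · rw [hFm]
        simp only [Fm]
        split_ifs <;> first | simp_all | omega
      · rw [hFm]
        intro hEq
        exact hbd (congrArg (fun p => p.1.2) hEq).symm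
    · have nb : (x a - x b).val ≠ (x d - x b).val :=
        fun h => had (x.injective (eq_of_sub_val_eq h))
      have W4 : (x d - x b).val < (x a - x b).val := by omega
      obtain ⟨E1', F1', E2', F2', cb⟩ := case4 hab had hbd W4 E1 F1 E2 F2
      have hFm : Fm x ((a,b),(c,d)) = ((b,d),(a,d)) := by
        simp only [Fm]; rw [if_neg h1, if_neg h2, if_neg h3, if_pos h4, if_neg W]
      refine ⟨?_, ?_, ?_⟩
      · rw [hFm]
        refine ⟨⟨hbd, fun i => rfl, E1', F1'⟩, ⟨had, ?_, ?_, ?_⟩⟩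
        · intro i
          rw [hz2 i]
          refine congrArg x ?_
          have hc := cyc hab hbd had i
          rw [Equiv.swap_comm d a] at hc
          exact hc
        · rw [show (x * Equiv.swap b d) a = x a from
                congrArg x (Equiv.swap_apply_of_ne_of_ne hab had),
              show (x * Equiv.swap b d) d = x b from congrArg x (Equiv.swap_apply_right b d)]
          exact E2'
        · rw [show (x * Equiv.swap b d) a = x a from
                congrArg x (Equiv.swap_apply_of_ne_of_ne hab had),
              show (x * Equiv.swap b d) d = x b from congrArg x (Equiv.swap_apply_right b d)]
          exact F2'
      · rw [hFm]
        simp only [Fm]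
        split_ifs <;> first | simp_all | omega
      · rw [hFm]
        intro hEq
        exact hab (congrArg (fun p => p.1.1) hEq).symm
  by_cases h5 : d = a
  · have hca : c ≠ a := h3
    have hcb : c ≠ b := fun h => h2 ⟨h, h5⟩
    rw [h5] at E2 F2 hz2
    rw [show (x * Equiv.swap a b) c = x c from
          congrArg x (Equiv.swap_apply_of_ne_of_ne hca hcb),
        show (x * Equiv.swap a b) a = x b from congrArg x (Equiv.swap_apply_left a b)] at E2 F2
    by_cases W : (x a - x c).val < (x b - x c).val
    · obtain ⟨E1', F1', E2', F2', cb⟩ := case5 hab hca hcb W E1 F1 E2 F2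
      have hFm : Fm x ((a,b),(c,d)) = ((c,a),(c,b)) := by
        simp only [Fm]; rw [if_neg h1, if_neg h2, if_neg h3, if_neg h4, if_pos h5, if_pos W]
      refine ⟨?_, ?_, ?_⟩
      · rw [hFm]
        refine ⟨⟨hca, fun i => rfl, E1', F1'⟩, ⟨hcb, ?_, ?_, ?_⟩⟩
        · intro i
          rw [hz2 i]
          refine congrArg x ?_
          have hc := cyc hab.symm hca.symm hcb.symm i
          rw [Equiv.swap_comm b a, Equiv.swap_comm a c] at hc
          exact hc
        · rw [show (x * Equiv.swap c a) c = x a from congrArg x (Equiv.swap_apply_left c a),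
              show (x * Equiv.swap c a) b = x b from
                congrArg x (Equiv.swap_apply_of_ne_of_ne hcb.symm hab.symm)]
          exact E2'
        · rw [show (x * Equiv.swap c a) c = x a from congrArg x (Equiv.swap_apply_left c a),
              show (x * Equiv.swap c a) b = x b from
                congrArg x (Equiv.swap_apply_of_ne_of_ne hcb.symm hab.symm)]
          exact F2'
      · rw [hFm]
        simp only [Fm]
        have ncond : ¬((c - a).val < (b - a).val) := by omega
        split_ifs <;> first | simp_all | omega
      · rw [hFm]
        intro hEq
        exact hca (congrArg (fun p => p.1.1) hEq)
    · have nb : (x b - x c).val ≠ (x a - x c).val :=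
        fun h => hab (x.injective (eq_of_sub_val_eq h)).symm
      have W6 : (x b - x c).val < (x a - x c).val := by omega
      obtain ⟨E1', F1', E2', F2', cb⟩ := case6 hab hca hcb W6 E1 F1 E2 F2
      have hFm : Fm x ((a,b),(c,d)) = ((c,b),(a,b)) := by
        simp only [Fm]; rw [if_neg h1, if_neg h2, if_neg h3, if_neg h4, if_pos h5, if_neg W]
      refine ⟨?_, ?_, ?_⟩
      · rw [hFm]
        refine ⟨⟨hcb, fun i => rfl, E1', F1'⟩, ⟨hab, ?_, ?_, ?_⟩⟩
        · intro i
          rw [hz2 i]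
          refine congrArg x ?_
          have hc := cyc' hab.symm hca.symm hcb.symm i
          rw [Equiv.swap_comm b a, Equiv.swap_comm a c] at hc
          exact hc
        · rw [show (x * Equiv.swap c b) a = x a from
                congrArg x (Equiv.swap_apply_of_ne_of_ne hca.symm hab),
              show (x * Equiv.swap c b) b = x c from congrArg x (Equiv.swap_apply_right c b)]
          exact E2'
        · rw [show (x * Equiv.swap c b) a = x a from
                congrArg x (Equiv.swap_apply_of_ne_of_ne hca.symm hab),
              show (x * Equiv.swap c b) b = x c from congrArg x (Equiv.swap_apply_right c b)]
          exact F2'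
      · rw [hFm]
        simp only [Fm]
        have ncond : ¬((c - a).val < (b - a).val) := by omega
        split_ifs <;> first | simp_all | omega
      · rw [hFm]
        intro hEq
        exact hca (congrArg (fun p => p.1.1) hEq)
  by_cases h6 : d = b
  · have hca : c ≠ a := h3
    have hcb : c ≠ b := by rw [h6] at hcd; exact hcd
    rw [h6] at E2 F2 hz2
    rw [show (x * Equiv.swap a b) c = x c from
          congrArg x (Equiv.swap_apply_of_ne_of_ne hca hcb),
        show (x * Equiv.swap a b) b = x a from congrArg x (Equiv.swap_apply_right a b)] at E2 F2
    by_cases W : (a - c).val < (b - c).val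
    · obtain ⟨E1', F1', E2', F2', cb⟩ := case7 hab hca hcb W E1 F1 E2 F2
      have hFm : Fm x ((a,b),(c,d)) = ((c,a),(a,b)) := by
        simp only [Fm]
        rw [if_neg h1, if_neg h2, if_neg h3, if_neg h4, if_neg h5, if_pos h6, if_pos W]
      refine ⟨?_, ?_, ?_⟩
      · rw [hFm]
        refine ⟨⟨hca, fun i => rfl, E1', F1'⟩, ⟨hab, ?_, ?_, ?_⟩⟩
        · intro i
          rw [hz2 i]
          refine congrArg x ?_
          have hc := cyc' hab hcb.symm hca.symm i
          rw [Equiv.swap_comm b c] at hc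
          exact hc
        · rw [show (x * Equiv.swap c a) a = x c from congrArg x (Equiv.swap_apply_right c a),
              show (x * Equiv.swap c a) b = x b from
                congrArg x (Equiv.swap_apply_of_ne_of_ne hcb.symm hab.symm)]
          exact E2'
        · rw [show (x * Equiv.swap c a) a = x c from congrArg x (Equiv.swap_apply_right c a),
              show (x * Equiv.swap c a) b = x b from
                congrArg x (Equiv.swap_apply_of_ne_of_ne hcb.symm hab.symm)]
          exact F2'
      · rw [hFm]
        simp only [Fm]
        have ncond : ¬((x c - x a).val < (x b - x a).val) := by omega
        split_ifs <;> first | simp_all | omega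
      · rw [hFm]
        intro hEq
        exact hca (congrArg (fun p => p.1.1) hEq)
    · have nb : (a - c).val ≠ (b - c).val := fun h => hab (eq_of_sub_val_eq h)
      have W8 : (b - c).val < (a - c).val := by omega
      obtain ⟨E1', F1', E2', F2', cb⟩ := case8 hab hca hcb W8 E1 F1 E2 F2
      have hFm : Fm x ((a,b),(c,d)) = ((c,b),(a,c)) := by
        simp only [Fm]
        rw [if_neg h1, if_neg h2, if_neg h3, if_neg h4, if_neg h5, if_pos h6, if_neg W]
      refine ⟨?_, ?_, ?_⟩
      · rw [hFm]
        refine ⟨⟨hcb, fun i => rfl, E1', F1'⟩, ⟨fun h => hca h.symm, ?_, ?_, ?_⟩⟩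
        · intro i
          rw [hz2 i]
          refine congrArg x ?_
          have hc := cyc hab hcb.symm hca.symm i
          rw [Equiv.swap_comm b c, Equiv.swap_comm c a] at hc
          exact hc
        · rw [show (x * Equiv.swap c b) a = x a from
                congrArg x (Equiv.swap_apply_of_ne_of_ne hca.symm hab),
              show (x * Equiv.swap c b) c = x b from congrArg x (Equiv.swap_apply_left c b)]
          exact E2'
        · rw [show (x * Equiv.swap c b) a = x a from
                congrArg x (Equiv.swap_apply_of_ne_of_ne hca.symm hab),
              show (x * Equiv.swap c b) c = x b from congrArg x (Equiv.swap_apply_left c b)]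
          exact F2'
      · rw [hFm]
        simp only [Fm]
        have ncond : ¬((x c - x a).val < (x b - x a).val) := by omega
        split_ifs <;> first | simp_all | omega
      · rw [hFm]
        intro hEq
        exact hca (congrArg (fun p => p.1.1) hEq)
  -- disjoint case
  · have hda : d ≠ a := h5
    have hdb : d ≠ b := h6
    rw [show (x * Equiv.swap a b) c = x c from
          congrArg x (Equiv.swap_apply_of_ne_of_ne h3 h4),
        show (x * Equiv.swap a b) d = x d from
          congrArg x (Equiv.swap_apply_of_ne_of_ne h5 h6)] at E2 F2
    obtain ⟨E1', E2'⟩ := caseD hab hcd h3 h4 h5 h6 E1 E2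
    have hFm : Fm x ((a,b),(c,d)) = ((c,d),(a,b)) := by
      simp only [Fm]
      rw [if_neg h1, if_neg h2, if_neg h3, if_neg h4, if_neg h5, if_neg h6]
    refine ⟨?_, ?_, ?_⟩
    · rw [hFm]
      refine ⟨⟨hcd, fun i => rfl, E1', F2⟩, ⟨hab, ?_, ?_, ?_⟩⟩
      · intro i
        rw [hz2 i]
        exact congrArg x (swap_comm_of_disjoint h3 h4 h5 h6 i)
      · rw [show (x * Equiv.swap c d) a = x a from
              congrArg x (Equiv.swap_apply_of_ne_of_ne (Ne.symm h3) (Ne.symm h5)),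
            show (x * Equiv.swap c d) b = x b from
              congrArg x (Equiv.swap_apply_of_ne_of_ne (Ne.symm h4) (Ne.symm h6))]
        exact E2'
      · rw [show (x * Equiv.swap c d) a = x a from
              congrArg x (Equiv.swap_apply_of_ne_of_ne (Ne.symm h3) (Ne.symm h5)),
            show (x * Equiv.swap c d) b = x b from
              congrArg x (Equiv.swap_apply_of_ne_of_ne (Ne.symm h4) (Ne.symm h6))]
        exact F1
    · rw [hFm]
      simp only [Fm]
      rw [if_neg (fun h => h3 (h : a = c ∧ b = d).1.symm),
          if_neg (fun h => h5 (h : a = d ∧ b = c).1.symm),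
          if_neg (fun h => h3 (h : a = c).symm),
          if_neg (fun h => h5 (h : a = d).symm),
          if_neg (fun h => h4 (h : b = c).symm),
          if_neg (fun h => h6 (h : b = d).symm)]
    · rw [hFm]
      intro hEq
      exact h3 (congrArg (fun p => p.1.1) hEq)

instance {n : ℕ} (x : Equiv.Perm (Fin n)) (a b c d : Fin n) :
    Decidable (EmptyR x a b c d) := by unfold EmptyR; infer_instance

instance {n : ℕ} (Mk : Finset (Fin n × Fin n)) (a b c d : Fin n) :
    Decidable (FreeR Mk a b c d) := by unfold FreeR; infer_instance

instance {n : ℕ} (Mk : Finset (Fin n × Fin n)) (x y : Equiv.Perm (Fin n)) :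
    DecidablePred (Qp Mk x y) := fun ab => by unfold Qp; infer_instance

instance {n : ℕ} (Mk : Finset (Fin n × Fin n)) (x z : Equiv.Perm (Fin n)) :
    DecidablePred (P2 Mk x z) := fun t => by unfold P2; infer_instance

open Finset in
lemma count {n : ℕ} (Mk : Finset (Fin n × Fin n)) (x z : Equiv.Perm (Fin n)) :
    ∑ y : Equiv.Perm (Fin n), numRect Mk x y * numRect Mk y z
      = (Finset.univ.filter (P2 Mk x z)).card := by
  classical
  have h1 : ∀ (x y : Equiv.Perm (Fin n)),
      numRect Mk x y = (Finset.univ.filter (Qp Mk x y)).card := by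
    intro x y
    rw [show numRect Mk x y = Nat.card {ab // Qp Mk x y ab} from rfl,
      Nat.card_eq_fintype_card]
    exact Fintype.card_subtype _
  rw [Finset.card_eq_sum_card_fiberwise
    (f := fun t => x * Equiv.swap t.1.1 t.1.2) (t := Finset.univ)
    (fun t _ => Finset.mem_univ _)]
  refine (Finset.sum_congr rfl fun y _ => ?_).symm
  rw [h1 x y, h1 y z, ← Finset.card_product]
  congr 1
  ext t
  simp only [Finset.mem_filter, Finset.mem_product, Finset.mem_univ, true_and]
  constructor
  · rintro ⟨⟨hA, hB⟩, rfl⟩; exact ⟨hA, hB⟩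
  · rintro ⟨hA, hB⟩
    have hy : x * Equiv.swap t.1.1 t.1.2 = y :=
      Equiv.ext fun i => (hA.2.1 i).symm
    subst hy
    exact ⟨⟨hA, hB⟩, rfl⟩

end GH

/-- If every row and every column of the `n×n` toroidal grid
contains a marking, then the tilde differential
`∂̃ x = Σ_y #{empty rectangles from x to y with no markings} ⬝ y` (mod 2)
squares to zero: the matrix of `∂̃ ∘ ∂̃` vanishes. -/
theorem tilde_differential_squares_to_zero
    {n : ℕ} (Mk : Finset (Fin n × Fin n))
    (hrow : ∀ s : Fin n, ∃ t : Fin n, (s, t) ∈ Mk)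
    (hcol : ∀ t : Fin n, ∃ s : Fin n, (s, t) ∈ Mk) :
    ∀ x z : Equiv.Perm (Fin n),
      ∑ y : Equiv.Perm (Fin n),
        (numRect Mk x y : ZMod 2) * (numRect Mk y z : ZMod 2) = 0 := by
  intro x z
  classical
  have hcast : (∑ y : Equiv.Perm (Fin n),
      (numRect Mk x y : ZMod 2) * (numRect Mk y z : ZMod 2))
      = ((∑ y : Equiv.Perm (Fin n), numRect Mk x y * numRect Mk y z : ℕ) : ZMod 2) := by
    push_cast
    rfl
  rw [hcast, GH.count Mk x z, Finset.card_eq_sum_ones, Nat.cast_sum]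
  refine Finset.sum_involution (fun t _ => GH.Fm x t) (fun t ht => ?_)
    (fun t ht _ => ?_) (fun t ht => ?_) (fun t ht => ?_)
  · decide
  · exact (GH.step hrow hcol t (Finset.mem_filter.mp ht).2).2.2
  · exact Finset.mem_filter.mpr ⟨Finset.mem_univ _,
      (GH.step hrow hcol t (Finset.mem_filter.mp ht).2).1⟩
  · exact (GH.step hrow hcol t (Finset.mem_filter.mp ht).2).2.1
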